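/- Quantifier elimination for Skolem arithmetic (semantic form over the standard model): for every L-formula φ(v₁,…,vₙ) there exist k ∈ ℕ, L-formulas θ₁,…,θ_k each with n free variables, natural numbers m₁,…,m_k, and a Boolean function B : {0,1}^k → {0,1}, such that for every tuple ā ∈ (ℕ⁺)ⁿ the following are equivalent: (a) ℕ⁺ ⊨ φ(ā); (b) B(t₁,…,t_k) = 1, where tᵢ = 1 exactly when there exists a finite set S of prime numbers with |S| = mᵢ such that for every p ∈ S the additive L-structure (ℕ,+,0) satisfies θᵢ at the tuple (v_p(a₁),…,v_p(aₙ)). -/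

import Mathlib

open FirstOrder Language

/-- The language `L` with one binary function symbol `·` and one constant symbol `1`. -/
def L : FirstOrder.Language :=
  ⟨fun n => match n with | 0 => Unit | 2 => Unit | _ => Empty, fun _ => Empty⟩

/-- Any monoid is an `L`-structure, with `·` interpreted as multiplication and `1` as the
identity. In particular `ℕ+` is the standard model of Skolem arithmetic, and
`Multiplicative ℕ` is the additive `L`-structure `(ℕ, +, 0)`. -/
instance (M : Type*) [Monoid M] : L.Structure M where
  funMap {n} f x :=
    match n, f, x with
    | 0, _, _ => 1
    | 2, _, x => x 0 * x 1
  RelMap r _ := r.elim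

namespace SkolemQE

instance (n : ℕ) : IsEmpty (L.Relations n) := inferInstanceAs (IsEmpty Empty)

abbrev Mu := Multiplicative ℕ

noncomputable section
open scoped Classical

/-- the `p`-part map into `Multiplicative ℕ` -/
def vp (p : ℕ) (a : ℕ+) : Mu := Multiplicative.ofAdd (padicValNat p (a : ℕ))

def vmap (p : ℕ) {γ : Type*} (v : γ → ℕ+) : γ → Mu := fun j => vp p (v j)

theorem vp_mul {p : ℕ} (hp : p.Prime) (a b : ℕ+) : vp p (a * b) = vp p a * vp p b := by
  haveI : Fact p.Prime := ⟨hp⟩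
  show Multiplicative.ofAdd (padicValNat p ((a * b : ℕ+) : ℕ)) = _
  rw [PNat.mul_coe, padicValNat.mul a.ne_zero b.ne_zero]
  rfl

theorem vp_one (p : ℕ) : vp p 1 = 1 := by
  simp [vp, PNat.one_coe, padicValNat.one]

theorem realize_vmap {γ : Type*} {p : ℕ} (hp : p.Prime) (t : L.Term γ) (v : γ → ℕ+) :
    t.realize (M := Mu) (vmap p v) = vp p (t.realize v) := by
  induction t with
  | var => rfl
  | func f ts ih =>
    rename_i n
    match n, f with
    | 0, f =>
      show (1 : Mu) = vp p 1
      rw [vp_one]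
    | 1, f => exact Empty.elim f
    | 2, f =>
      show Term.realize (vmap p v) (ts 0) * Term.realize (vmap p v) (ts 1)
          = vp p (Term.realize v (ts 0) * Term.realize v (ts 1))
      rw [ih 0, ih 1, vp_mul hp]
    | (n + 3), f => exact Empty.elim f

/-- the set of primes at which `θ` holds of the `p`-parts of `v` -/
def cntSet {γ : Type*} (θ : L.Formula γ) (v : γ → ℕ+) : Set ℕ :=
  {p | p.Prime ∧ θ.Realize (vmap p v)}

/-- "there are at least `m` primes where `θ` holds" -/
def AtL {γ : Type*} (m : ℕ) (θ : L.Formula γ) (v : γ → ℕ+) : Prop :=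
  ∃ S : Finset ℕ, S.card = m ∧ ∀ p ∈ S, p.Prime ∧ θ.Realize (vmap p v)

theorem atL_iff {γ : Type*} {m : ℕ} {θ : L.Formula γ} {v : γ → ℕ+} :
    AtL m θ v ↔ (m : ℕ∞) ≤ (cntSet θ v).encard := by
  constructor
  · rintro ⟨S, rfl, hS⟩
    have h1 : (S : Set ℕ) ⊆ cntSet θ v := fun p hp => hS p hp
    calc ((S.card : ℕ∞)) = (S : Set ℕ).encard := (Set.encard_coe_eq_coe_finsetCard S).symm
    _ ≤ _ := Set.encard_mono h1
  · intro h
    obtain ⟨t, hts, htc⟩ := Set.exists_subset_encard_eq h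
    have hfin : t.Finite := Set.finite_of_encard_eq_coe htc
    refine ⟨hfin.toFinset, ?_, ?_⟩
    · have := hfin.encard_eq_coe_toFinset_card
      rw [htc] at this
      exact_mod_cast this.symm
    · intro p hp
      exact hts (hfin.mem_toFinset.mp hp)

theorem atL_one_iff {γ : Type*} {θ : L.Formula γ} {v : γ → ℕ+} :
    AtL 1 θ v ↔ ∃ p : ℕ, p.Prime ∧ θ.Realize (vmap p v) := by
  constructor
  · rintro ⟨S, hS, h⟩
    obtain ⟨p, rfl⟩ := Finset.card_eq_one.mp hS
    exact ⟨p, h p (Finset.mem_singleton_self p)⟩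
  · rintro ⟨p, hp⟩
    exact ⟨{p}, rfl, by simpa using hp⟩

/-- finite conjunction of bounded formulas -/
def conjL {γ : Type*} {b : ℕ} : List (L.BoundedFormula γ b) → L.BoundedFormula γ b
  | [] => ⊤
  | ψ :: l => ψ ⊓ conjL l

theorem realize_conjL {γ : Type*} {b : ℕ} {M : Type*} [Monoid M]
    (l : List (L.BoundedFormula γ b)) (w : γ → M) (xs : Fin b → M) :
    (conjL l).Realize w xs ↔ ∀ ψ ∈ l, ψ.Realize w xs := by
  induction l with
  | nil => simp [conjL]
  | cons ψ l ih => simp [conjL, BoundedFormula.realize_inf, ih]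


theorem decide_eq_bool {P : Prop} [Decidable P] {b : Bool} : decide P = b ↔ (P ↔ b = true) := by
  cases b <;> simp

theorem bool_fun_ext {α : Type*} {f g : α → Bool} : f = g ↔ ∀ j, (f j = true ↔ g j = true) := by
  constructor
  · rintro rfl j; rfl
  · intro h; funext j; have := h j; revert this; cases f j <;> cases g j <;> simp

/-- assign fibers of prescribed sizes on a finite set -/
theorem exists_fiber_fun {ι τt : Type*} [Nonempty τt] [Fintype τt] [DecidableEq τt]
    (C : Finset ι) (g : τt → ℕ) (h : ∑ τ, g τ = C.card) :
    ∃ σ : ι → τt, ∀ τ, (C.filter (fun p => σ p = τ)).card = g τ := by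
  obtain ⟨N, hn⟩ : ∃ N, C.card = N := ⟨_, rfl⟩
  induction N generalizing C g with
  | zero =>
    have hC : C = ∅ := Finset.card_eq_zero.mp hn
    subst hC
    refine ⟨fun _ => Classical.arbitrary τt, fun τ => ?_⟩
    have hg : ∀ τ, g τ = 0 := by
      intro τ
      exact Finset.sum_eq_zero_iff.mp (by simpa using h) τ (Finset.mem_univ τ)
    simp [hg τ]
  | succ N ih =>
    have hne : C.Nonempty := Finset.card_pos.mp (by omega)
    obtain ⟨x, hx⟩ := hne
    have hsum : ∑ τ, g τ = N + 1 := by rw [h, hn]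
    have hex : ∃ τ₀, g τ₀ ≠ 0 := by
      by_contra hc
      push_neg at hc
      rw [Finset.sum_eq_zero (fun τ _ => hc τ)] at hsum
      omega
    obtain ⟨τ₀, hτ₀⟩ := hex
    set g' : τt → ℕ := Function.update g τ₀ (g τ₀ - 1) with hg'
    have hCx : (C.erase x).card = N := by rw [Finset.card_erase_of_mem hx, hn]; omega
    have hsum' : ∑ τ, g' τ = (C.erase x).card := by
      rw [hCx, hg']
      rw [Finset.sum_update_of_mem (Finset.mem_univ τ₀)]
      have h2 := Finset.sum_eq_add_sum_sdiff_singleton_of_mem (Finset.mem_univ τ₀) g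
      omega
    obtain ⟨σ', hσ'⟩ := ih (C.erase x) g' hsum' hCx
    refine ⟨Function.update σ' x τ₀, fun τ => ?_⟩
    have hfil : ∀ τ, (C.erase x).filter (fun p => Function.update σ' x τ₀ p = τ) =
        (C.erase x).filter (fun p => σ' p = τ) := by
      intro τ
      apply Finset.filter_congr
      intro p hp
      have hpx : p ≠ x := Finset.ne_of_mem_erase hp
      simp [Function.update_of_ne hpx]
    have hCsplit : C = insert x (C.erase x) := (Finset.insert_erase hx).symm
    by_cases hττ : τ = τ₀
    · subst hττ
      rw [hCsplit, Finset.filter_insert]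
      rw [if_pos (by simp [Function.update_self])]
      rw [Finset.card_insert_of_notMem (by simp)]
      rw [hfil, hσ']
      simp only [hg', Function.update_self]
      omega
    · rw [hCsplit, Finset.filter_insert]
      rw [if_neg (by simp only [Function.update_self]; exact fun hc => hττ hc.symm)]
      rw [hfil, hσ']
      simp [hg', Function.update_of_ne (Ne.symm (fun hc => hττ hc.symm))]

theorem encard_biUnion {α β : Type*} (s : Finset β) (f : β → Set α)
    (hdis : ∀ b₁ ∈ s, ∀ b₂ ∈ s, b₁ ≠ b₂ → Disjoint (f b₁) (f b₂)) :
    (⋃ b ∈ s, f b).encard = ∑ b ∈ s, (f b).encard := by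
  induction s using Finset.induction_on with
  | empty => simp
  | insert _ _ hb ih =>
    rename_i a s
    rw [Finset.set_biUnion_insert, Finset.sum_insert hb, Set.encard_union_eq, ih]
    · intro b₁ h₁ b₂ h₂ hne
      exact hdis b₁ (Finset.mem_insert_of_mem h₁) b₂ (Finset.mem_insert_of_mem h₂) hne
    · apply Set.disjoint_iUnion₂_right.mpr
      intro b hbs
      exact hdis a (Finset.mem_insert_self a s) b (Finset.mem_insert_of_mem hbs)
        (fun hc => hb (hc ▸ hbs))

/-- Retarget a finite distribution to a new total, preserving small values exactly and
bigness of big values. -/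
theorem retarget {τt : Type*} [Fintype τt] [Nonempty τt] (B : ℕ) (hB : 0 < B) (f : τt → ℕ)
    (T : ℕ) (hf : Fintype.card τt * B ≤ ∑ τ, f τ) (hT : Fintype.card τt * B ≤ T) :
    ∃ f' : τt → ℕ, ∑ τ, f' τ = T ∧
      ∀ τ, (f' τ ≠ 0 → f τ ≠ 0) ∧ (f τ < B → f' τ = f τ) ∧ (B ≤ f τ → B ≤ f' τ) := by
  set n := Fintype.card τt with hndef
  have hex : ∃ τs, B ≤ f τs := by
    by_contra hc
    push_neg at hc
    have h1 : ∑ τ, f τ ≤ n * (B - 1) := by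
      calc ∑ τ, f τ ≤ ∑ _τ : τt, (B - 1) :=
            Finset.sum_le_sum (fun τ _ => by have := hc τ; omega)
      _ = n * (B - 1) := by rw [Finset.sum_const, Finset.card_univ, smul_eq_mul]
    have hn1 : 1 ≤ n := Fintype.card_pos
    have h2 : n * (B - 1) + n * 1 = n * B := by rw [← Nat.mul_add]; congr 1; omega
    omega
  obtain ⟨τs, hτs⟩ := hex
  set S := Finset.univ.filter (fun τ => f τ < B) with hSdef
  set Bg := Finset.univ.filter (fun τ => ¬ f τ < B) with hBgdef
  have hτsBg : τs ∈ Bg := by simp [hBgdef]; omega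
  have hcard : S.card + Bg.card = n := by
    rw [hSdef, hBgdef, Finset.card_filter_add_card_filter_not, Finset.card_univ]
  have hSsum : ∑ τ ∈ S, f τ ≤ S.card * (B - 1) := by
    have := Finset.sum_le_card_nsmul S f (B - 1) (fun τ hτ => by
      simp [hSdef] at hτ; omega)
    simpa [smul_eq_mul] using this
  have hbase : ∑ τ ∈ S, f τ + Bg.card * B ≤ n * B := by
    have h2 : S.card * (B - 1) + Bg.card * B ≤ (S.card + Bg.card) * B := by
      rw [Nat.add_mul]
      have h3 : S.card * (B - 1) ≤ S.card * B := Nat.mul_le_mul_left _ (by omega)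
      omega
    rw [hcard] at h2
    omega
  set base := ∑ τ ∈ S, f τ + Bg.card * B with hbasedef
  set rem := T - base with hremdef
  have hbt : base + rem = T := by omega
  have hBg1 : 1 ≤ Bg.card := Finset.card_pos.mpr ⟨τs, hτsBg⟩
  refine ⟨fun τ => if f τ < B then f τ else if τ = τs then B + rem else B, ?_, ?_⟩
  · rw [← Finset.sum_filter_add_sum_filter_not Finset.univ (fun τ => f τ < B)]
    have e1 : ∑ τ ∈ S, (if f τ < B then f τ else if τ = τs then B + rem else B)
        = ∑ τ ∈ S, f τ := by
      apply Finset.sum_congr rfl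
      intro τ hτ
      simp only [hSdef, Finset.mem_filter] at hτ
      simp [hτ.2]
    have e2 : ∑ τ ∈ Bg, (if f τ < B then f τ else if τ = τs then B + rem else B)
        = (B + rem) + (Bg.card - 1) * B := by
      rw [← Finset.add_sum_erase _ _ hτsBg]
      have hτsB : ¬ f τs < B := by omega
      congr 1
      · simp [hτsB]
      · rw [Finset.sum_congr rfl (g := fun _ => B) (fun τ hτ => ?_), Finset.sum_const,
          Finset.card_erase_of_mem hτsBg, smul_eq_mul]
        have hτBg := Finset.mem_of_mem_erase hτ
        have hne := Finset.ne_of_mem_erase hτ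
        simp only [hBgdef, Finset.mem_filter] at hτBg
        simp [hτBg.2, hne]
    rw [e1, e2]
    have h4 : (Bg.card - 1) * B + 1 * B = Bg.card * B := by
      rw [← Nat.add_mul]; congr 1; omega
    omega
  · intro τ
    refine ⟨fun h => ?_, fun h => ?_, fun h => ?_⟩
    · by_cases h1 : f τ < B
      · simpa [h1] using h
      · omega
    · simp [h]
    · have h1 : ¬ f τ < B := by omega
      by_cases h2 : τ = τs
      · subst h2
        simp [h1]
      · simp [h1, h2]

theorem status_sum {ι : Type*} (s : Finset ι) (B : ℕ) (x y : ι → ℕ∞)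
    (h : ∀ i ∈ s, x i = y i ∨ ((B : ℕ∞) ≤ x i ∧ (B : ℕ∞) ≤ y i)) {mm : ℕ} (hmm : mm ≤ B) :
    ((mm : ℕ∞) ≤ ∑ i ∈ s, x i ↔ (mm : ℕ∞) ≤ ∑ i ∈ s, y i) := by
  by_cases hbig : ∃ i ∈ s, (B : ℕ∞) ≤ x i ∧ (B : ℕ∞) ≤ y i
  · obtain ⟨i, his, hx, hy⟩ := hbig
    have hmB : (mm : ℕ∞) ≤ (B : ℕ∞) := by exact_mod_cast hmm
    have h1 : (mm : ℕ∞) ≤ ∑ i ∈ s, x i :=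
      le_trans (le_trans hmB hx) (Finset.single_le_sum (fun j _ => zero_le) his)
    have h2 : (mm : ℕ∞) ≤ ∑ i ∈ s, y i :=
      le_trans (le_trans hmB hy) (Finset.single_le_sum (fun j _ => zero_le) his)
    simp [h1, h2]
  · have heq : ∀ i ∈ s, x i = y i := fun i hi =>
      (h i hi).resolve_right (fun hc => hbig ⟨i, hi, hc⟩)
    rw [Finset.sum_congr rfl heq]


section QE

variable {γ : Type} {k : ℕ} (θ : Fin k → L.Formula (γ ⊕ Fin 1))

abbrev Pat (k : ℕ) := Fin k → Bool
abbrev Dat (k : ℕ) := (Pat k → Bool) × Pat k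

def patOf (w : γ → Mu) (c : Mu) : Pat k := fun j => decide ((θ j).Realize (Sum.elim w fun _ => c))

def achv (w : γ → Mu) : Pat k → Bool := fun τ => decide (∃ c : Mu, patOf θ w c = τ)

def datOf (w : γ → Mu) : Dat k := (achv θ w, patOf θ w 1)

def dat0 : Dat k := datOf θ (fun _ => 1)

def liftθ (j : Fin k) : L.BoundedFormula γ 1 :=
  BoundedFormula.relabel (id : γ ⊕ Fin 1 → γ ⊕ Fin 1) (θ j)

theorem realize_liftθ (j : Fin k) (w : γ → Mu) (xs : Fin 1 → Mu) :
    (liftθ θ j).Realize w xs ↔ (θ j).Realize (Sum.elim w fun _ => xs 0) := by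
  rw [liftθ, BoundedFormula.realize_relabel]
  have h1 : (Sum.elim w (xs ∘ Fin.castAdd 0) ∘ id) = Sum.elim w (fun _ => xs 0) := by
    funext z
    rcases z with a | i
    · rfl
    · show xs (Fin.castAdd 0 i) = xs 0
      congr
      exact Subsingleton.elim _ _
  rw [h1]
  unfold Formula.Realize
  exact iff_of_eq (congrArg (BoundedFormula.Realize (θ j) _) (Subsingleton.elim _ _))

def patForm (τ : Pat k) : L.BoundedFormula γ 1 :=
  conjL ((List.finRange k).map fun j => if τ j then liftθ θ j else (liftθ θ j).not)

theorem realize_patForm (τ : Pat k) (w : γ → Mu) (xs : Fin 1 → Mu) :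
    (patForm θ τ).Realize w xs ↔ patOf θ w (xs 0) = τ := by
  rw [patForm, realize_conjL, bool_fun_ext]
  constructor
  · intro h j
    have hj := h _ (List.mem_map.mpr ⟨j, List.mem_finRange j, rfl⟩)
    cases hτ : τ j with
    | true =>
      rw [hτ, if_pos rfl, realize_liftθ] at hj
      simp [patOf, hj]
    | false =>
      rw [hτ] at hj
      simp only [Bool.false_eq_true, if_false, BoundedFormula.realize_not, realize_liftθ] at hj
      simp [patOf, hj]
  · intro h ψ hψ
    obtain ⟨j, -, rfl⟩ := List.mem_map.mp hψ
    have hj := h j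
    cases hτ : τ j with
    | true =>
      rw [if_pos rfl, realize_liftθ]
      rw [hτ] at hj
      simpa [patOf] using hj.mpr rfl
    | false =>
      simp only [Bool.false_eq_true, if_false, BoundedFormula.realize_not, realize_liftθ]
      rw [hτ] at hj
      intro hc
      simp only [patOf, Bool.false_eq_true, iff_false] at hj
      exact hj (by simpa using hc)

def DForm (τ : Pat k) : L.Formula γ := (patForm θ τ).ex

theorem snoc_zero (xs0 : Fin 0 → Mu) (c : Mu) : (Fin.snoc xs0 c : Fin 1 → Mu) 0 = c := by
  simp [Fin.snoc]

theorem realize_DForm (τ : Pat k) (w : γ → Mu) (xs : Fin 0 → Mu) :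
    BoundedFormula.Realize (DForm θ τ) w xs ↔ achv θ w τ = true := by
  have h0 : BoundedFormula.Realize (DForm θ τ) w xs ↔ ∃ c : Mu, patOf θ w c = τ := by
    rw [DForm, BoundedFormula.realize_ex]
    constructor
    · rintro ⟨c, hc⟩
      rw [realize_patForm, snoc_zero] at hc
      exact ⟨c, hc⟩
    · rintro ⟨c, hc⟩
      exact ⟨c, by rw [realize_patForm, snoc_zero]; exact hc⟩
  rw [h0, achv, decide_eq_true_iff]

def oneT : L.Term γ := Constants.term (⟨⟩ : L.Constants)

def zsub (j : Fin k) : L.Formula γ := (θ j).subst (Sum.elim Term.var fun _ => oneT)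

theorem realize_zsub (j : Fin k) (w : γ → Mu) (xs : Fin 0 → Mu) :
    BoundedFormula.Realize (zsub θ j) w xs ↔ (θ j).Realize (Sum.elim w fun _ => (1 : Mu)) := by
  rw [zsub, BoundedFormula.realize_subst]
  have he : (fun i : γ ⊕ Fin 1 => Term.realize w (Sum.elim Term.var (fun _ => oneT) i)) =
      Sum.elim w (fun _ => (1 : Mu)) := by
    funext z
    rcases z with a | i
    · rfl
    · rfl
  rw [he]
  unfold Formula.Realize
  exact iff_of_eq (congrArg (BoundedFormula.Realize (θ j) _) (Subsingleton.elim _ _))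

def ZForm (τ : Pat k) : L.Formula γ :=
  conjL ((List.finRange k).map fun j => if τ j then zsub θ j else (zsub θ j).not)

theorem realize_ZForm (τ : Pat k) (w : γ → Mu) (xs : Fin 0 → Mu) :
    BoundedFormula.Realize (ZForm θ τ) w xs ↔ patOf θ w 1 = τ := by
  rw [ZForm, realize_conjL, bool_fun_ext]
  constructor
  · intro h j
    have hj := h _ (List.mem_map.mpr ⟨j, List.mem_finRange j, rfl⟩)
    cases hτ : τ j with
    | true =>
      rw [hτ, if_pos rfl, realize_zsub] at hj
      simp [patOf, hj]
    | false =>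
      rw [hτ] at hj
      simp only [Bool.false_eq_true, if_false] at hj
      have h2 := BoundedFormula.realize_not.mp hj
      have h3 : ¬ (θ j).Realize (Sum.elim w fun _ => (1 : Mu)) :=
        fun hc => h2 ((realize_zsub θ j w xs).mpr hc)
      simp [patOf, h3]
  · intro h ψ hψ
    obtain ⟨j, -, rfl⟩ := List.mem_map.mp hψ
    have hj := h j
    cases hτ : τ j with
    | true =>
      rw [if_pos rfl, realize_zsub]
      rw [hτ] at hj
      simpa [patOf] using hj.mpr rfl
    | false =>
      simp only [Bool.false_eq_true, if_false]
      apply BoundedFormula.realize_not.mpr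
      intro hc
      rw [hτ] at hj
      simp only [patOf, Bool.false_eq_true, iff_false] at hj
      exact hj (by simpa using (realize_zsub θ j w xs).mp hc)

def classForm (ω : Dat k) : L.Formula γ :=
  (conjL (((Finset.univ : Finset (Pat k)).toList).map
    fun τ => if ω.1 τ then DForm θ τ else (DForm θ τ).not)) ⊓ ZForm θ ω.2

theorem realize_classForm (ω : Dat k) (w : γ → Mu) (xs : Fin 0 → Mu) :
    BoundedFormula.Realize (classForm θ ω) w xs ↔ datOf θ w = ω := by
  rw [classForm, BoundedFormula.realize_inf, realize_ZForm, realize_conjL]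
  have h1 : (∀ ψ ∈ (((Finset.univ : Finset (Pat k)).toList).map
      fun τ => if ω.1 τ then DForm θ τ else (DForm θ τ).not),
        BoundedFormula.Realize ψ w xs) ↔ achv θ w = ω.1 := by
    rw [bool_fun_ext]
    constructor
    · intro h τ
      have hτ' := h _ (List.mem_map.mpr ⟨τ, Finset.mem_toList.mpr (Finset.mem_univ τ), rfl⟩)
      cases hω : ω.1 τ with
      | true =>
        rw [hω, if_pos rfl, realize_DForm] at hτ'
        simp [hτ', hω]
      | false =>
        rw [hω] at hτ'
        simp only [Bool.false_eq_true, if_false] at hτ'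
        have h2 := BoundedFormula.realize_not.mp hτ'
        simp only [Bool.false_eq_true, iff_false]
        exact fun hc => h2 ((realize_DForm θ τ w xs).mpr hc)
    · intro h ψ hψ
      obtain ⟨τ, -, rfl⟩ := List.mem_map.mp hψ
      have hτ := h τ
      cases hω : ω.1 τ with
      | true =>
        rw [if_pos rfl, realize_DForm]
        rw [hω] at hτ
        exact hτ.mpr rfl
      | false =>
        simp only [Bool.false_eq_true, if_false]
        apply BoundedFormula.realize_not.mpr
        intro hc
        rw [hω] at hτ
        simp only [Bool.false_eq_true, iff_false] at hτ
        exact hτ ((realize_DForm θ τ w xs).mp hc)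
  rw [h1]
  simp [datOf, Prod.ext_iff]


variable (m : Fin k → ℕ)

def M1 : ℕ := (Finset.univ.sup m) + 1

theorem m_lt_M1 (j : Fin k) : m j < M1 m :=
  Nat.lt_succ_of_le (Finset.le_sup (Finset.mem_univ j))

def Mn : ℕ := Fintype.card (Pat k) * M1 m

def vclass (v : γ → ℕ+) (ω : Dat k) : Set ℕ := {p | p.Prime ∧ datOf θ (vmap p v) = ω}

theorem realize_classForm' (ω : Dat k) (w : γ → Mu) :
    Formula.Realize (classForm θ ω) w ↔ datOf θ w = ω := by
  unfold Formula.Realize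
  exact realize_classForm θ ω w _

theorem cntSet_classForm (v : γ → ℕ+) (ω : Dat k) :
    cntSet (classForm θ ω) v = vclass θ v ω := by
  ext p
  simp only [cntSet, vclass, Set.mem_setOf_eq]
  exact and_congr_right fun _ => realize_classForm' θ ω (vmap p v)

theorem vmap_eq_one (v : γ → ℕ+) {p : ℕ} (h : ∀ g2, ¬ p ∣ (v g2 : ℕ)) :
    vmap p v = fun _ => (1 : Mu) := by
  funext g2
  show Multiplicative.ofAdd (padicValNat p (v g2 : ℕ)) = 1
  rw [padicValNat.eq_zero_of_not_dvd (h g2)]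
  rfl

def divSet (v : γ → ℕ+) : Set ℕ := {p | p.Prime ∧ ∃ g2 : γ, p ∣ (v g2 : ℕ)}

theorem divSet_finite [Fintype γ] (v : γ → ℕ+) : (divSet v).Finite := by
  have h1 : ∀ g2 : γ, {p : ℕ | p ∣ (v g2 : ℕ)}.Finite := by
    intro g2
    apply Set.Finite.subset (Set.finite_Iic ((v g2 : ℕ)))
    intro p hp
    exact Nat.le_of_dvd (v g2).pos hp
  apply Set.Finite.subset (Set.finite_iUnion h1)
  rintro p ⟨hp, g2, hdvd⟩
  exact Set.mem_iUnion.mpr ⟨g2, hdvd⟩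

theorem dat_eq_dat0 (v : γ → ℕ+) {p : ℕ} (hp : p.Prime) (h : p ∉ divSet v) :
    datOf θ (vmap p v) = dat0 θ := by
  have he : vmap p v = fun _ => 1 := vmap_eq_one v (fun g2 hd => h ⟨hp, g2, hd⟩)
  rw [he]
  rfl

theorem vclass_dat0_infinite [Fintype γ] (v : γ → ℕ+) : (vclass θ v (dat0 θ)).Infinite := by
  have h1 : {p : ℕ | p.Prime} \ divSet v ⊆ vclass θ v (dat0 θ) := by
    rintro p ⟨hp, hnd⟩
    exact ⟨hp, dat_eq_dat0 θ v hp hnd⟩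
  exact (Nat.infinite_setOf_prime.diff (divSet_finite v)).mono h1

theorem vclass_finite [Fintype γ] (v : γ → ℕ+) {ω : Dat k} (hω : ω ≠ dat0 θ) :
    (vclass θ v ω).Finite := by
  apply (divSet_finite v).subset
  rintro p ⟨hp, hd⟩
  by_contra hc
  exact hω (hd.symm.trans (dat_eq_dat0 θ v hp hc))

theorem vclass_disjoint (v : γ → ℕ+) :
    ∀ ω₁ ω₂ : Dat k, ω₁ ≠ ω₂ → Disjoint (vclass θ v ω₁) (vclass θ v ω₂) := by
  intro ω₁ ω₂ hne
  rw [Set.disjoint_left]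
  rintro p ⟨hp, h1⟩ ⟨hp2, h2⟩
  exact hne (h1.symm.trans h2)

def satSet (v : γ → ℕ+) (y : ℕ+) (j : Fin k) : Set ℕ :=
  cntSet (θ j) (Sum.elim v fun _ => y)

def sigSet (σ : ℕ → Pat k) (j : Fin k) : Set ℕ := {p | p.Prime ∧ σ p j = true}

theorem satSet_eq_sigSet (v : γ → ℕ+) (y : ℕ+) (j : Fin k) :
    satSet θ v y j = sigSet (fun p => patOf θ (vmap p v) (vp p y)) j := by
  ext p
  simp only [satSet, cntSet, Set.mem_setOf_eq, sigSet, patOf, decide_eq_true_iff]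
  apply and_congr_right
  intro hp
  have he : vmap p (Sum.elim v fun _ => y) = (Sum.elim (vmap p v) (fun _ => vp p y) : γ ⊕ Fin 1 → Mu) := by
    funext z
    rcases z with a | i <;> rfl
  rw [he]

theorem achv_patOf (w : γ → Mu) (c : Mu) : achv θ w (patOf θ w c) = true := by
  simp only [achv, decide_eq_true_iff]
  exact ⟨c, rfl⟩

theorem fiber_decomp (Cs : Set ℕ) (σ : ℕ → Pat k) (j : Fin k) :
    {p ∈ Cs | σ p j = true}.encard
      = ∑ τ ∈ Finset.univ.filter (fun τ : Pat k => τ j = true), {p ∈ Cs | σ p = τ}.encard := by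
  rw [← encard_biUnion]
  · congr 1
    ext p
    simp only [Set.mem_setOf_eq]
    constructor
    · rintro ⟨hC, hj⟩
      exact Set.mem_biUnion (Finset.mem_filter.mpr ⟨Finset.mem_univ _, hj⟩) ⟨hC, rfl⟩
    · intro hmem
      obtain ⟨τ, hτ, ⟨hC, hστ⟩⟩ := Set.mem_iUnion₂.mp hmem
      exact ⟨hC, by rw [hστ]; exact (Finset.mem_filter.mp hτ).2⟩
  · intro τ₁ _ τ₂ _ hne
    rw [Set.disjoint_left]
    rintro p ⟨_, h1⟩ ⟨_, h2⟩
    exact hne (h1 ▸ h2 ▸ rfl)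

theorem sigSet_decomp [Fintype γ] (v : γ → ℕ+) (σ : ℕ → Pat k) (j : Fin k) :
    (sigSet σ j).encard = ∑ ω : Dat k, {p ∈ vclass θ v ω | σ p j = true}.encard := by
  rw [← encard_biUnion Finset.univ (fun ω => {p ∈ vclass θ v ω | σ p j = true})]
  · congr 1
    ext p
    simp only [sigSet, Set.mem_setOf_eq]
    constructor
    · rintro ⟨hp, hj⟩
      exact Set.mem_biUnion (Finset.mem_univ (datOf θ (vmap p v))) ⟨⟨hp, rfl⟩, hj⟩
    · intro hmem
      obtain ⟨ω, -, ⟨⟨hpp, -⟩, hj⟩⟩ := Set.mem_iUnion₂.mp hmem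
      exact ⟨hpp, hj⟩
  · intro ω₁ _ ω₂ _ hne
    have := vclass_disjoint θ v ω₁ ω₂ hne
    rw [Set.disjoint_left] at this ⊢
    rintro p ⟨h1, _⟩ ⟨h2, _⟩
    exact this h1 h2

/-- the abstract counting criterion -/
def CritT (t : Dat k → ℕ) (s : Pat k) : Prop :=
  ∃ g : Dat k → Pat k → ℕ,
    (∀ ω τ, g ω τ ≠ 0 → ω.1 τ = true) ∧
    (∀ ω, ω ≠ dat0 θ → ∑ τ, g ω τ = t ω) ∧
    (∀ j, (s j = true ↔ ((dat0 θ).2 j = true ∨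
      m j ≤ ∑ ω : Dat k, ∑ τ ∈ Finset.univ.filter (fun τ : Pat k => τ j = true), g ω τ)))

def tC (v : γ → ℕ+) (ω : Dat k) : ℕ := ((vclass θ v ω).encard ⊓ (Mn (k := k) m : ℕ∞)).toNat

theorem sum_pair {k : ℕ} {f f' : Pat k → ℕ} (B : ℕ)
    (hp : ∀ τ, (f τ < B → f' τ = f τ) ∧ (B ≤ f τ → B ≤ f' τ)) (F : Finset (Pat k)) :
    (∑ τ ∈ F, f τ = ∑ τ ∈ F, f' τ) ∨ (B ≤ ∑ τ ∈ F, f τ ∧ B ≤ ∑ τ ∈ F, f' τ) := by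
  by_cases hall : ∀ τ ∈ F, f τ < B
  · exact Or.inl (Finset.sum_congr rfl fun τ hτ => ((hp τ).1 (hall τ hτ)).symm)
  · right
    push_neg at hall
    obtain ⟨τ, hτF, hτB⟩ := hall
    constructor
    · exact le_trans (by omega) (Finset.single_le_sum (fun _ _ => Nat.zero_le _) hτF)
    · exact le_trans ((hp τ).2 (by omega)) (Finset.single_le_sum (fun _ _ => Nat.zero_le _) hτF)

/-- key status computation: the count status of `σ` is determined by fiber data `g`. -/
theorem status_of_fibers [Fintype γ] (v : γ → ℕ+) (σ : ℕ → Pat k) (g : Dat k → Pat k → ℕ)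
    (hfib0 : ∀ j, (dat0 θ).2 j = false →
      {p ∈ vclass θ v (dat0 θ) | σ p j = true}.encard
        = ∑ τ ∈ Finset.univ.filter (fun τ : Pat k => τ j = true), (g (dat0 θ) τ : ℕ∞))
    (hinf : ∀ j, (dat0 θ).2 j = true →
      {p ∈ vclass θ v (dat0 θ) | σ p j = true}.Infinite)
    (hpair : ∀ ω, ω ≠ dat0 θ → ∀ j,
      {p ∈ vclass θ v ω | σ p j = true}.encard
          = ∑ τ ∈ Finset.univ.filter (fun τ : Pat k => τ j = true), (g ω τ : ℕ∞)
        ∨ ((M1 m : ℕ∞) ≤ {p ∈ vclass θ v ω | σ p j = true}.encard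
            ∧ (M1 m : ℕ∞) ≤ ∑ τ ∈ Finset.univ.filter (fun τ : Pat k => τ j = true), (g ω τ : ℕ∞)))
    (j : Fin k) :
    ((m j : ℕ∞) ≤ (sigSet σ j).encard ↔ ((dat0 θ).2 j = true ∨
      m j ≤ ∑ ω : Dat k, ∑ τ ∈ Finset.univ.filter (fun τ : Pat k => τ j = true), g ω τ)) := by
  rw [sigSet_decomp θ v σ j]
  cases hz : (dat0 θ).2 j with
  | true =>
    have h1 : {p ∈ vclass θ v (dat0 θ) | σ p j = true}.encard = ⊤ :=
      (hinf j hz).encard_eq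
    have h2 : (⊤ : ℕ∞) ≤ ∑ ω : Dat k, {p ∈ vclass θ v ω | σ p j = true}.encard := by
      rw [← h1]
      exact Finset.single_le_sum (f := fun ω => {p ∈ vclass θ v ω | σ p j = true}.encard)
        (fun _ _ => zero_le) (Finset.mem_univ (dat0 θ))
    simp only [true_or, iff_true]
    exact le_trans le_top h2
  | false =>
    have hiff := status_sum (Finset.univ : Finset (Dat k)) (M1 m)
      (fun ω => {p ∈ vclass θ v ω | σ p j = true}.encard)
      (fun ω => ∑ τ ∈ Finset.univ.filter (fun τ : Pat k => τ j = true), (g ω τ : ℕ∞))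
      (fun ω _ => by
        by_cases hω : ω = dat0 θ
        · subst hω
          exact Or.inl (hfib0 j hz)
        · exact hpair ω hω j)
      (le_of_lt (m_lt_M1 m j))
    rw [hiff]
    simp only [Bool.false_eq_true, false_or]
    have hcast : ((∑ ω : Dat k, ∑ τ ∈ Finset.univ.filter (fun τ : Pat k => τ j = true), g ω τ : ℕ) : ℕ∞)
        = ∑ ω : Dat k, ∑ τ ∈ Finset.univ.filter (fun τ : Pat k => τ j = true), (g ω τ : ℕ∞) := by
      simp only [Nat.cast_sum]
    rw [← hcast]
    exact Nat.cast_le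

theorem vp_eq_one_of_not_dvd {p : ℕ} {y : ℕ+} (h : ¬ p ∣ (y : ℕ)) : vp p y = 1 := by
  show Multiplicative.ofAdd (padicValNat p (y : ℕ)) = 1
  rw [padicValNat.eq_zero_of_not_dvd h]
  rfl

theorem chg_finite (v : γ → ℕ+) (y : ℕ+) :
    {p : ℕ | p.Prime ∧ patOf θ (vmap p v) (vp p y) ≠ patOf θ (vmap p v) 1}.Finite := by
  have h1 : {p : ℕ | p ∣ (y : ℕ)}.Finite :=
    (Set.finite_Iic (y : ℕ)).subset fun p hp => Nat.le_of_dvd y.pos hp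
  apply h1.subset
  rintro p ⟨hp, hne⟩
  by_contra hd
  exact hne (by rw [vp_eq_one_of_not_dvd hd])

theorem cast_sum_pat {k : ℕ} (F : Finset (Pat k)) (f : Pat k → ℕ) :
    ∑ τ ∈ F, ((f τ : ℕ) : ℕ∞) = ((∑ τ ∈ F, f τ : ℕ) : ℕ∞) := by
  simp [Nat.cast_sum]

theorem toNat_min_coe (a b : ℕ) : ((a : ℕ∞) ⊓ (b : ℕ∞)).toNat = min a b := by
  rcases le_total a b with h | h
  · rw [min_eq_left h, inf_eq_left.mpr (by exact_mod_cast h : (a : ℕ∞) ≤ (b : ℕ∞))]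
    exact ENat.toNat_coe a
  · rw [min_eq_right h, inf_eq_right.mpr (by exact_mod_cast h : (b : ℕ∞) ≤ (a : ℕ∞))]
    exact ENat.toNat_coe b

theorem tC_eq_min [Fintype γ] (v : γ → ℕ+) {ω : Dat k} (hω : ω ≠ dat0 θ) :
    tC θ m v ω = min (vclass θ v ω).ncard (Mn (k := k) m) := by
  unfold tC
  rw [← (vclass_finite θ v hω).cast_ncard_eq, toNat_min_coe]

theorem forward [Fintype γ] (v : γ → ℕ+) (s : Pat k) (y : ℕ+)
    (hy : ∀ j, ((m j : ℕ∞) ≤ (satSet θ v y j).encard ↔ s j = true)) :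
    CritT θ m (tC θ m v) s := by
  classical
  set σ : ℕ → Pat k := fun p => patOf θ (vmap p v) (vp p y) with hσ
  have hchg : {p : ℕ | p.Prime ∧ σ p ≠ patOf θ (vmap p v) 1}.Finite := chg_finite θ v y
  set fib : Dat k → Pat k → Set ℕ := fun ω τ => {p ∈ vclass θ v ω | σ p = τ} with hfibdef
  have hfib_fin : ∀ ω : Dat k, ω ≠ dat0 θ → ∀ τ, (fib ω τ).Finite :=
    fun ω hω τ => (vclass_finite θ v hω).subset (fun p hp => hp.1)
  have hfib0_fin : ∀ τ, τ ≠ (dat0 θ).2 → (fib (dat0 θ) τ).Finite := by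
    intro τ hτ
    apply hchg.subset
    rintro p ⟨⟨hp, hd⟩, hστ⟩
    refine ⟨hp, ?_⟩
    rw [hστ]
    intro hc
    exact hτ (hc.trans (congrArg Prod.snd hd))
  have hsup : ∀ ω : Dat k, ∀ τ, (fib ω τ).Nonempty → ω.1 τ = true := by
    rintro ω τ ⟨p, ⟨⟨hp, hd⟩, hστ⟩⟩
    have h1 : achv θ (vmap p v) (σ p) = true := achv_patOf θ (vmap p v) (vp p y)
    rw [hστ] at h1
    rw [← congrArg Prod.fst hd]
    exact h1
  set Nf : Dat k → Pat k → ℕ := fun ω τ => (fib ω τ).ncard with hNfdef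
  have hfibdec : ∀ ω : Dat k, ∀ j : Fin k,
      {p ∈ vclass θ v ω | σ p j = true}.encard
        = ∑ τ ∈ Finset.univ.filter (fun τ : Pat k => τ j = true), (fib ω τ).encard :=
    fun ω j => fiber_decomp (vclass θ v ω) σ j
  have hNsum : ∀ ω : Dat k, ω ≠ dat0 θ → ∑ τ, Nf ω τ = (vclass θ v ω).ncard := by
    intro ω hω
    have hCfin := vclass_finite θ v hω
    have hdec : (vclass θ v ω).encard = ∑ τ : Pat k, (fib ω τ).encard := by
      rw [← encard_biUnion Finset.univ (fun τ => fib ω τ)]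
      · congr 1
        ext p
        constructor
        · intro hp
          exact Set.mem_biUnion (Finset.mem_univ (σ p)) ⟨hp, rfl⟩
        · intro hmem
          obtain ⟨τ, -, ⟨hC, -⟩⟩ := Set.mem_iUnion₂.mp hmem
          exact hC
      · intro τ₁ _ τ₂ _ hne
        rw [Set.disjoint_left]
        rintro p ⟨-, h1⟩ ⟨-, h2⟩
        exact hne (h1 ▸ h2 ▸ rfl)
    have hc1 : ((vclass θ v ω).ncard : ℕ∞) = ∑ τ : Pat k, ((Nf ω τ : ℕ) : ℕ∞) := by
      rw [hCfin.cast_ncard_eq, hdec]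
      exact Finset.sum_congr rfl fun τ _ => ((hfib_fin ω hω τ).cast_ncard_eq).symm
    rw [cast_sum_pat] at hc1
    exact_mod_cast hc1.symm
  have hdefg : ∀ ω : Dat k, ∃ gω : Pat k → ℕ, ω ≠ dat0 θ →
      (∑ τ, gω τ = tC θ m v ω) ∧
      (∀ τ, gω τ ≠ 0 → Nf ω τ ≠ 0) ∧
      (∀ τ, (Nf ω τ < M1 m → gω τ = Nf ω τ) ∧ (M1 m ≤ Nf ω τ → M1 m ≤ gω τ)) := by
    intro ω
    by_cases hω : ω = dat0 θ
    · exact ⟨fun _ => 0, fun hc => absurd hω hc⟩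
    by_cases hbig : (vclass θ v ω).ncard ≤ Mn (k := k) m
    · refine ⟨Nf ω, fun _ => ⟨?_, fun τ h => h, fun τ => ⟨fun _ => rfl, fun h => h⟩⟩⟩
      rw [hNsum ω hω, tC_eq_min θ m v hω]
      omega
    · have hret := retarget (M1 m) (Nat.succ_pos _) (Nf ω) (Mn (k := k) m)
        (by
          rw [hNsum ω hω]
          have hMn : Mn (k := k) m = Fintype.card (Pat k) * M1 m := rfl
          omega)
        (Nat.le_of_eq rfl)
      obtain ⟨f', hf'sum, hf'p⟩ := hret
      refine ⟨f', fun _ => ⟨?_, fun τ => (hf'p τ).1, fun τ => ⟨(hf'p τ).2.1, (hf'p τ).2.2⟩⟩⟩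
      rw [hf'sum, tC_eq_min θ m v hω]
      omega
  choose gs hgs using hdefg
  set g : Dat k → Pat k → ℕ := fun ω => if ω = dat0 θ then
      (fun τ => if τ = (dat0 θ).2 then 0 else Nf (dat0 θ) τ) else gs ω with hgdef
  refine ⟨g, ?_, ?_, ?_⟩
  · -- support
    intro ω τ hne
    by_cases hω : ω = dat0 θ
    · subst hω
      have hne' : (if τ = (dat0 θ).2 then 0 else Nf (dat0 θ) τ) ≠ 0 := by
        simpa [hgdef] using hne
      by_cases hτ : τ = (dat0 θ).2
      · rw [if_pos hτ] at hne'
        exact absurd rfl hne'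
      · rw [if_neg hτ] at hne'
        exact hsup _ τ (Set.nonempty_of_ncard_ne_zero hne')
    · have hne' : gs ω τ ≠ 0 := by simpa [hgdef, hω] using hne
      exact hsup ω τ (Set.nonempty_of_ncard_ne_zero ((hgs ω hω).2.1 τ hne'))
  · -- sums
    intro ω hω
    have hg : g ω = gs ω := by simp [hgdef, hω]
    rw [hg]
    exact (hgs ω hω).1
  · -- statuses
    intro j
    have hfib0 : ∀ j', (dat0 θ).2 j' = false →
        {p ∈ vclass θ v (dat0 θ) | σ p j' = true}.encard
          = ∑ τ ∈ Finset.univ.filter (fun τ : Pat k => τ j' = true), (g (dat0 θ) τ : ℕ∞) := by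
      intro j' hz
      rw [hfibdec (dat0 θ) j']
      apply Finset.sum_congr rfl
      intro τ hτ
      have hτj : τ j' = true := (Finset.mem_filter.mp hτ).2
      have hτne : τ ≠ (dat0 θ).2 := by
        intro hc
        subst hc
        rw [hτj] at hz
        exact Bool.noConfusion hz
      have hgτ : g (dat0 θ) τ = Nf (dat0 θ) τ := by
        simp [hgdef, hτne]
      rw [hgτ]
      exact ((hfib0_fin τ hτne).cast_ncard_eq).symm
    have hinf : ∀ j', (dat0 θ).2 j' = true →
        {p ∈ vclass θ v (dat0 θ) | σ p j' = true}.Infinite := by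
      intro j' hz
      apply ((vclass_dat0_infinite θ v).diff hchg).mono
      rintro p ⟨⟨hp, hd⟩, hnc⟩
      refine ⟨⟨hp, hd⟩, ?_⟩
      have hσp : σ p = patOf θ (vmap p v) 1 := by
        by_contra hcc
        exact hnc ⟨hp, hcc⟩
      have h2 : patOf θ (vmap p v) 1 = (dat0 θ).2 := congrArg Prod.snd hd
      rw [hσp, h2]
      exact hz
    have hpair : ∀ ω, ω ≠ dat0 θ → ∀ j',
        {p ∈ vclass θ v ω | σ p j' = true}.encard
            = ∑ τ ∈ Finset.univ.filter (fun τ : Pat k => τ j' = true), (g ω τ : ℕ∞)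
          ∨ ((M1 m : ℕ∞) ≤ {p ∈ vclass θ v ω | σ p j' = true}.encard
              ∧ (M1 m : ℕ∞) ≤ ∑ τ ∈ Finset.univ.filter (fun τ : Pat k => τ j' = true),
                  (g ω τ : ℕ∞)) := by
      intro ω hω j'
      have hg : g ω = gs ω := by simp [hgdef, hω]
      rw [hfibdec ω j', hg]
      have hsum_e : ∑ τ ∈ Finset.univ.filter (fun τ : Pat k => τ j' = true), (fib ω τ).encard
          = ((∑ τ ∈ Finset.univ.filter (fun τ : Pat k => τ j' = true), Nf ω τ : ℕ) : ℕ∞) := by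
        rw [← cast_sum_pat]
        exact Finset.sum_congr rfl fun τ _ => (hfib_fin ω hω τ).cast_ncard_eq.symm
      rw [hsum_e, cast_sum_pat]
      rcases sum_pair (M1 m) (fun τ => ⟨((hgs ω hω).2.2 τ).1, ((hgs ω hω).2.2 τ).2⟩)
          (Finset.univ.filter (fun τ : Pat k => τ j' = true)) with he | ⟨h1, h2⟩
      · exact Or.inl (congrArg Nat.cast he)
      · exact Or.inr ⟨Nat.cast_le.mpr h1, Nat.cast_le.mpr h2⟩
    rw [← hy j, satSet_eq_sigSet θ v y j]
    exact status_of_fibers θ m v σ g hfib0 hinf hpair j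

theorem backward [Fintype γ] (v : γ → ℕ+) (s : Pat k)
    (hCrit : CritT θ m (tC θ m v) s) :
    ∃ y : ℕ+, ∀ j, ((m j : ℕ∞) ≤ (satSet θ v y j).encard ↔ s j = true) := by
  classical
  obtain ⟨g, hsup, hsum, hstat⟩ := hCrit
  -- per-class assignments for classes other than the generic one
  have hstep : ∀ ω : Dat k, ∃ (σω : ℕ → Pat k) (N : Pat k → ℕ), ω ≠ dat0 θ →
      ((∀ τ, N τ ≠ 0 → g ω τ ≠ 0) ∧
       (∀ τ, (g ω τ < M1 m → N τ = g ω τ) ∧ (M1 m ≤ g ω τ → M1 m ≤ N τ)) ∧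
       (∀ τ, {p ∈ vclass θ v ω | σω p = τ}.encard = (N τ : ℕ∞))) := by
    intro ω
    by_cases hω : ω = dat0 θ
    · exact ⟨fun _ => (dat0 θ).2, fun _ => 0, fun hc => absurd hω hc⟩
    have hCfin := vclass_finite θ v hω
    have hMn : Mn (k := k) m = Fintype.card (Pat k) * M1 m := rfl
    have hNex : ∃ N : Pat k → ℕ, (∑ τ, N τ = (vclass θ v ω).ncard) ∧
        (∀ τ, N τ ≠ 0 → g ω τ ≠ 0) ∧
        (∀ τ, (g ω τ < M1 m → N τ = g ω τ) ∧ (M1 m ≤ g ω τ → M1 m ≤ N τ)) := by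
      by_cases hbig : (vclass θ v ω).ncard ≤ Mn (k := k) m
      · refine ⟨g ω, ?_, fun τ h => h, fun τ => ⟨fun _ => rfl, fun h => h⟩⟩
        rw [hsum ω hω, tC_eq_min θ m v hω]
        omega
      · obtain ⟨f', h1, h2⟩ := retarget (M1 m) (Nat.succ_pos _) (g ω) ((vclass θ v ω).ncard)
          (by rw [hsum ω hω, tC_eq_min θ m v hω]; omega)
          (by omega)
        exact ⟨f', h1, fun τ => (h2 τ).1, fun τ => ⟨(h2 τ).2.1, (h2 τ).2.2⟩⟩
    obtain ⟨N, hNsum, hNsup, hNpair⟩ := hNex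
    have hcard : ∑ τ, N τ = hCfin.toFinset.card := by
      rw [hNsum, Set.ncard_eq_toFinset_card _ hCfin]
    obtain ⟨σω, hσω⟩ := exists_fiber_fun hCfin.toFinset N hcard
    refine ⟨σω, N, fun _ => ⟨hNsup, hNpair, fun τ => ?_⟩⟩
    have hset : {p ∈ vclass θ v ω | σω p = τ}
        = ↑(hCfin.toFinset.filter (fun p => σω p = τ)) := by
      ext p
      simp [Set.Finite.mem_toFinset]
    rw [hset, Set.encard_coe_eq_coe_finsetCard]
    exact_mod_cast congrArg Nat.cast (hσω τ)
  choose σs Ns hσs using hstep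
  -- the generic class
  have hinfC := vclass_dat0_infinite θ v
  obtain ⟨tF0, htFsub, htFfin, htFcard⟩ :=
    hinfC.exists_subset_ncard_eq (∑ τ, g (dat0 θ) τ)
  have hcard0 : ∑ τ, g (dat0 θ) τ = htFfin.toFinset.card := by
    rw [← Set.ncard_eq_toFinset_card _ htFfin, htFcard]
  obtain ⟨σF, hσF⟩ := exists_fiber_fun htFfin.toFinset (g (dat0 θ)) hcard0
  set σ0 : ℕ → Pat k := fun p => if p ∈ htFfin.toFinset then σF p else (dat0 θ).2 with hσ0def
  set σ : ℕ → Pat k := fun p => if datOf θ (vmap p v) = dat0 θ then σ0 p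
      else σs (datOf θ (vmap p v)) p with hσdef
  have hσd : ∀ p, datOf θ (vmap p v) = dat0 θ → σ p = σ0 p := by
    intro p hd; rw [hσdef]; simp [hd]
  have hσnd : ∀ p, datOf θ (vmap p v) ≠ dat0 θ → σ p = σs (datOf θ (vmap p v)) p := by
    intro p hd; rw [hσdef]; simp [hd]
  have hσ0F : ∀ p, p ∈ htFfin.toFinset → σ0 p = σF p := by
    intro p hp; rw [hσ0def]; simp [hp]
  have hσ0nF : ∀ p, p ∉ htFfin.toFinset → σ0 p = (dat0 θ).2 := by
    intro p hp; rw [hσ0def]; simp [hp]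
  -- fibers of σ on each class
  have hfib_ne : ∀ ω : Dat k, ω ≠ dat0 θ → ∀ τ,
      {p ∈ vclass θ v ω | σ p = τ}.encard = (Ns ω τ : ℕ∞) := by
    intro ω hω τ
    have hset : {p ∈ vclass θ v ω | σ p = τ} = {p ∈ vclass θ v ω | σs ω p = τ} := by
      ext p
      refine and_congr_right fun hp => ?_
      have hd : datOf θ (vmap p v) = ω := hp.2
      rw [hσnd p (by rw [hd]; exact hω), hd]
    rw [hset]
    exact ((hσs ω hω).2.2 τ)
  have hfib0_ne : ∀ τ, τ ≠ (dat0 θ).2 →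
      {p ∈ vclass θ v (dat0 θ) | σ p = τ}.encard = (g (dat0 θ) τ : ℕ∞) := by
    intro τ hτ
    have hset : {p ∈ vclass θ v (dat0 θ) | σ p = τ}
        = ↑(htFfin.toFinset.filter (fun p => σF p = τ)) := by
      ext p
      simp only [Set.mem_setOf_eq, Finset.coe_filter, Set.Finite.mem_toFinset]
      constructor
      · rintro ⟨⟨hp, hd⟩, hστ⟩
        rw [hσd p hd] at hστ
        by_cases hptF : p ∈ htFfin.toFinset
        · rw [hσ0F p hptF] at hστ
          exact ⟨htFfin.mem_toFinset.mp hptF, hστ⟩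
        · rw [hσ0nF p hptF] at hστ
          exact absurd hστ.symm hτ
      · rintro ⟨hptF, hστ⟩
        have hpC : p ∈ vclass θ v (dat0 θ) := htFsub hptF
        refine ⟨hpC, ?_⟩
        rw [hσd p hpC.2, hσ0F p (htFfin.mem_toFinset.mpr hptF)]
        exact hστ
    rw [hset, Set.encard_coe_eq_coe_finsetCard]
    exact_mod_cast congrArg Nat.cast (hσF τ)
  have hfibz : {p ∈ vclass θ v (dat0 θ) | σ p = (dat0 θ).2} ⊇
      vclass θ v (dat0 θ) \ ↑htFfin.toFinset := by
    rintro p ⟨hpC, hptF⟩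
    refine ⟨hpC, ?_⟩
    rw [hσd p hpC.2, hσ0nF p (fun hc => hptF hc)]
  -- achievability
  have hach : ∀ p : ℕ, p.Prime → achv θ (vmap p v) (σ p) = true := by
    intro p hp
    by_cases hd : datOf θ (vmap p v) = dat0 θ
    · have hσp : σ p = σ0 p := hσd p hd
      by_cases hptF : p ∈ htFfin.toFinset
      · have hσp2 : σ p = σF p := by rw [hσp, hσ0F p hptF]
        have hmem : p ∈ htFfin.toFinset.filter (fun q => σF q = σF p) :=
          Finset.mem_filter.mpr ⟨hptF, rfl⟩
        have hg0 : g (dat0 θ) (σF p) ≠ 0 := by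
          rw [← hσF (σF p)]
          exact Finset.card_ne_zero_of_mem hmem
        have h1 : (dat0 θ).1 (σF p) = true := hsup (dat0 θ) (σF p) hg0
        have h2 : achv θ (vmap p v) = (dat0 θ).1 := congrArg Prod.fst hd
        rw [hσp2, h2]
        exact h1
      · have hσp2 : σ p = (dat0 θ).2 := by rw [hσp, hσ0nF p hptF]
        have h2 : patOf θ (vmap p v) 1 = (dat0 θ).2 := congrArg Prod.snd hd
        rw [hσp2, ← h2]
        exact achv_patOf θ (vmap p v) 1
    · have hσp : σ p = σs (datOf θ (vmap p v)) p := hσnd p hd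
      set ω := datOf θ (vmap p v) with hωdef
      have hpC : p ∈ vclass θ v ω := ⟨hp, rfl⟩
      have hmem : p ∈ {q ∈ vclass θ v ω | σs ω q = σs ω p} := ⟨hpC, rfl⟩
      have hNne : Ns ω (σs ω p) ≠ 0 := by
        intro hc
        have he := (hσs ω hd).2.2 (σs ω p)
        rw [hc] at he
        have : ({q ∈ vclass θ v ω | σs ω q = σs ω p} : Set ℕ).encard = 0 := by
          rw [he]; rfl
        rw [Set.encard_eq_zero] at this
        rw [this] at hmem
        exact hmem
      have hg0 : g ω (σs ω p) ≠ 0 := (hσs ω hd).1 (σs ω p) hNne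
      have h1 : ω.1 (σs ω p) = true := hsup ω (σs ω p) hg0
      rw [hσp]
      exact h1
  -- the changed set is finite
  set Ch : Set ℕ := {p : ℕ | p.Prime ∧ σ p ≠ patOf θ (vmap p v) 1} with hChdef
  have hChfin : Ch.Finite := by
    have hsub : Ch ⊆ ↑htFfin.toFinset ∪ divSet v := by
      rintro p ⟨hp, hne⟩
      by_cases hd : datOf θ (vmap p v) = dat0 θ
      · left
        by_contra hptF
        apply hne
        have hσp : σ p = (dat0 θ).2 := by
          rw [hσd p hd, hσ0nF p hptF]
        rw [hσp]
        exact (congrArg Prod.snd hd).symm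
      · right
        by_contra hdv
        exact hd (dat_eq_dat0 θ v hp hdv)
    exact ((Finset.finite_toSet _).union (divSet_finite v)).subset hsub
  -- choose exponents and build y
  have hachc : ∀ p : ℕ, ∃ cnp : ℕ,
      (p.Prime → patOf θ (vmap p v) (Multiplicative.ofAdd cnp) = σ p) ∧ (p ∉ Ch → cnp = 0) := by
    intro p
    by_cases hp : p.Prime
    · by_cases hpc : p ∈ Ch
      · have h1 := hach p hp
        rw [achv, decide_eq_true_iff] at h1
        obtain ⟨c, hc⟩ := h1
        exact ⟨Multiplicative.toAdd c, fun _ => by simpa using hc, fun hn => absurd hpc hn⟩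
      · refine ⟨0, fun _ => ?_, fun _ => rfl⟩
        have hσp : σ p = patOf θ (vmap p v) 1 := by
          by_contra hcc
          exact hpc ⟨hp, hcc⟩
        rw [hσp]
        rfl
    · exact ⟨0, fun hc => absurd hc hp, fun _ => rfl⟩
  choose cn hcn using hachc
  set Fch := hChfin.toFinset with hFchdef
  have hFchP : ∀ p ∈ Fch, p.Prime := fun p hp => (hChfin.mem_toFinset.mp hp).1
  have hyn : 0 < ∏ p ∈ Fch, p ^ cn p :=
    Finset.prod_pos (fun p hp => pow_pos (hFchP p hp).pos _)
  set y : ℕ+ := ⟨∏ p ∈ Fch, p ^ cn p, hyn⟩ with hydef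
  have hval : ∀ q : ℕ, q.Prime → padicValNat q (y : ℕ) = if q ∈ Fch then cn q else 0 := by
    intro q hq
    have h1 : (y : ℕ).factorization = ∑ p ∈ Fch, (p ^ cn p).factorization := by
      show (∏ p ∈ Fch, p ^ cn p).factorization = _
      exact Nat.factorization_prod (fun p hp => pow_ne_zero _ (hFchP p hp).pos.ne')
    have h2 : padicValNat q (y : ℕ) = (y : ℕ).factorization q :=
      (Nat.factorization_def _ hq).symm
    rw [h2, h1, Finsupp.finset_sum_apply]
    have h3 : ∀ p ∈ Fch, (p ^ cn p).factorization q = if p = q then cn p else 0 := by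
      intro p hp
      rw [(hFchP p hp).factorization_pow, Finsupp.single_apply]
    rw [Finset.sum_congr rfl h3, Finset.sum_ite_eq' Fch q cn]
  have hpat : ∀ p : ℕ, p.Prime → patOf θ (vmap p v) (vp p y) = σ p := by
    intro p hp
    have hvp : vp p y = Multiplicative.ofAdd (if p ∈ Fch then cn p else 0) := by
      show Multiplicative.ofAdd (padicValNat p (y : ℕ)) = _
      rw [hval p hp]
    by_cases hpF : p ∈ Fch
    · rw [hvp]
      simp only [if_pos hpF]
      exact (hcn p).1 hp
    · rw [hvp]
      simp only [if_neg hpF]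
      have hpCh : p ∉ Ch := fun hc => hpF (hChfin.mem_toFinset.mpr hc)
      have hσp : σ p = patOf θ (vmap p v) 1 := by
        by_contra hcc
        exact hpCh ⟨hp, hcc⟩
      rw [hσp]
      rfl
  -- conclude
  refine ⟨y, fun j => ?_⟩
  have hseq : satSet θ v y j = sigSet σ j := by
    rw [satSet_eq_sigSet θ v y j]
    ext p
    simp only [sigSet, Set.mem_setOf_eq]
    exact and_congr_right fun hp => by rw [hpat p hp]
  rw [hseq]
  have hfib0 : ∀ j', (dat0 θ).2 j' = false →
      {p ∈ vclass θ v (dat0 θ) | σ p j' = true}.encard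
        = ∑ τ ∈ Finset.univ.filter (fun τ : Pat k => τ j' = true), (g (dat0 θ) τ : ℕ∞) := by
    intro j' hz
    rw [fiber_decomp (vclass θ v (dat0 θ)) σ j']
    apply Finset.sum_congr rfl
    intro τ hτ
    have hτj : τ j' = true := (Finset.mem_filter.mp hτ).2
    have hτne : τ ≠ (dat0 θ).2 := by
      intro hc
      subst hc
      rw [hτj] at hz
      exact Bool.noConfusion hz
    exact hfib0_ne τ hτne
  have hinf : ∀ j', (dat0 θ).2 j' = true →
      {p ∈ vclass θ v (dat0 θ) | σ p j' = true}.Infinite := by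
    intro j' hz
    apply Set.Infinite.mono _ (hinfC.diff (Finset.finite_toSet htFfin.toFinset))
    intro p hpd
    have hpz := hfibz hpd
    exact ⟨hpz.1, by rw [hpz.2, hz]⟩
  have hpair : ∀ ω, ω ≠ dat0 θ → ∀ j',
      {p ∈ vclass θ v ω | σ p j' = true}.encard
          = ∑ τ ∈ Finset.univ.filter (fun τ : Pat k => τ j' = true), (g ω τ : ℕ∞)
        ∨ ((M1 m : ℕ∞) ≤ {p ∈ vclass θ v ω | σ p j' = true}.encard
            ∧ (M1 m : ℕ∞) ≤ ∑ τ ∈ Finset.univ.filter (fun τ : Pat k => τ j' = true),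
                (g ω τ : ℕ∞)) := by
    intro ω hω j'
    rw [fiber_decomp (vclass θ v ω) σ j']
    have he1 : ∑ τ ∈ Finset.univ.filter (fun τ : Pat k => τ j' = true),
        {p ∈ vclass θ v ω | σ p = τ}.encard
        = ((∑ τ ∈ Finset.univ.filter (fun τ : Pat k => τ j' = true), Ns ω τ : ℕ) : ℕ∞) := by
      rw [← cast_sum_pat]
      exact Finset.sum_congr rfl fun τ _ => hfib_ne ω hω τ
    rw [he1, cast_sum_pat]
    rcases sum_pair (M1 m) (fun τ => ⟨((hσs ω hω).2.1 τ).1, ((hσs ω hω).2.1 τ).2⟩)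
        (Finset.univ.filter (fun τ : Pat k => τ j' = true)) with he | ⟨h1, h2⟩
    · exact Or.inl (congrArg Nat.cast he.symm)
    · exact Or.inr ⟨Nat.cast_le.mpr h2, Nat.cast_le.mpr h1⟩
  rw [status_of_fibers θ m v σ g hfib0 hinf hpair j]
  exact (hstat j).symm

theorem coe_tC_le [Fintype γ] (v : γ → ℕ+) (ω : Dat k) :
    (tC θ m v ω : ℕ∞) ≤ (vclass θ v ω).encard ∧ tC θ m v ω ≤ Mn (k := k) m := by
  have hne : (vclass θ v ω).encard ⊓ (Mn (k := k) m : ℕ∞) ≠ ⊤ := by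
    intro hc
    have := inf_le_right (a := (vclass θ v ω).encard) (b := (Mn (k := k) m : ℕ∞))
    rw [hc] at this
    exact absurd (top_le_iff.mp this) (by simp)
  have hcoe : ((tC θ m v ω : ℕ) : ℕ∞) = (vclass θ v ω).encard ⊓ (Mn (k := k) m : ℕ∞) :=
    ENat.coe_toNat hne
  constructor
  · rw [hcoe]
    exact inf_le_left
  · have h2 : ((tC θ m v ω : ℕ) : ℕ∞) ≤ (Mn (k := k) m : ℕ∞) := by
      rw [hcoe]
      exact inf_le_right
    exact_mod_cast h2

theorem qe_ex [Fintype γ] (k : ℕ) (θ : Fin k → L.Formula (γ ⊕ Fin 1)) (m : Fin k → ℕ)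
    (B : (Fin k → Bool) → Bool) :
    ∃ (k' : ℕ) (θ' : Fin k' → L.Formula γ) (m' : Fin k' → ℕ) (B' : (Fin k' → Bool) → Bool),
      ∀ v : γ → ℕ+,
        ((∃ y : ℕ+, B (fun i => decide (AtL (m i) (θ i) (Sum.elim v fun _ => y))) = true) ↔
          B' (fun i => decide (AtL (m' i) (θ' i) v)) = true) := by
  classical
  set k' := Fintype.card (Dat k × Fin (Mn (k := k) m + 1)) with hk'
  set E2 := (Fintype.equivFin (Dat k × Fin (Mn (k := k) m + 1))) with hE2
  set ext1 : (Fin k' → Bool) → (Dat k → ℕ) := fun f ω =>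
    Finset.sup (Finset.univ.filter (fun r : Fin (Mn (k := k) m + 1) => f (E2 (ω, r)) = true))
      Fin.val with hext1
  refine ⟨k', fun i => classForm θ (E2.symm i).1, fun i => ((E2.symm i).2 : ℕ),
    fun f => decide (∃ s : Pat k, B s = true ∧ CritT θ m (ext1 f) s), fun v => ?_⟩
  have hbit : ∀ ω : Dat k, ∀ r : Fin (Mn (k := k) m + 1),
      (decide (AtL (((E2.symm (E2 (ω, r))).2 : Fin (Mn (k := k) m + 1)) : ℕ)
        (classForm θ (E2.symm (E2 (ω, r))).1) v) = true)
        ↔ ((r : ℕ∞) ≤ (vclass θ v ω).encard) := by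
    intro ω r
    rw [Equiv.symm_apply_apply, decide_eq_true_iff, atL_iff, cntSet_classForm]
  have hext : ext1 (fun i => decide (AtL (((E2.symm i).2 : Fin (Mn (k := k) m + 1)) : ℕ)
      (classForm θ (E2.symm i).1) v)) = tC θ m v := by
    funext ω
    apply le_antisymm
    · apply Finset.sup_le
      intro r hr
      rw [Finset.mem_filter] at hr
      have hr2 := (hbit ω r).mp hr.2
      have hrM : (r : ℕ) ≤ Mn (k := k) m := Nat.lt_succ_iff.mp r.2
      have h2 : ((r : ℕ) : ℕ∞) ≤ (vclass θ v ω).encard ⊓ (Mn (k := k) m : ℕ∞) :=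
        le_inf hr2 (by exact_mod_cast hrM)
      have hne : (vclass θ v ω).encard ⊓ (Mn (k := k) m : ℕ∞) ≠ ⊤ := by
        intro hc
        have h3 := inf_le_right (a := (vclass θ v ω).encard) (b := (Mn (k := k) m : ℕ∞))
        rw [hc] at h3
        exact absurd (top_le_iff.mp h3) (by simp)
      rw [← ENat.coe_toNat hne] at h2
      exact_mod_cast h2
    · have h1 := coe_tC_le θ m v ω
      set r0 : Fin (Mn (k := k) m + 1) := ⟨tC θ m v ω, Nat.lt_succ_of_le h1.2⟩ with hr0
      have hmem : r0 ∈ Finset.univ.filter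
          (fun r : Fin (Mn (k := k) m + 1) =>
            (fun i => decide (AtL (((E2.symm i).2 : Fin (Mn (k := k) m + 1)) : ℕ)
              (classForm θ (E2.symm i).1) v)) (E2 (ω, r)) = true) := by
        rw [Finset.mem_filter]
        exact ⟨Finset.mem_univ _, (hbit ω r0).mpr h1.1⟩
      exact Finset.le_sup (f := Fin.val) hmem
  rw [decide_eq_true_iff, hext]
  constructor
  · rintro ⟨y, hy⟩
    refine ⟨fun i => decide (AtL (m i) (θ i) (Sum.elim v fun _ => y)), hy, ?_⟩
    apply forward θ m v _ y
    intro j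
    rw [decide_eq_true_iff]
    exact (atL_iff (m := m j) (θ := θ j) (v := Sum.elim v fun _ => y)).symm
  · rintro ⟨s, hBs, hcrit⟩
    obtain ⟨y, hy⟩ := backward θ m v s hcrit
    refine ⟨y, ?_⟩
    have hbits : (fun i => decide (AtL (m i) (θ i) (Sum.elim v fun _ => y))) = s := by
      funext j
      rw [decide_eq_bool]
      constructor
      · intro h
        exact (hy j).mp (atL_iff.mp h)
      · intro h
        exact atL_iff.mpr ((hy j).mpr h)
    rw [hbits]
    exact hBs

end QE

theorem main_bf (n : ℕ) : ∀ {l : ℕ} (φ : L.BoundedFormula (Fin n) l),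
    ∃ (k : ℕ) (θ : Fin k → L.Formula (Fin n ⊕ Fin l)) (m : Fin k → ℕ)
      (B : (Fin k → Bool) → Bool),
      ∀ (a : Fin n → ℕ+) (x : Fin l → ℕ+),
        φ.Realize a x ↔ B (fun i => decide (AtL (m i) (θ i) (Sum.elim a x))) = true := by
  intro l φ
  induction φ with
  | falsum =>
    refine ⟨0, Fin.elim0, Fin.elim0, fun _ => false, fun a x => ?_⟩
    simp only [Bool.false_eq_true, iff_false]
    exact fun h => h
  | equal t₁ t₂ =>
    refine ⟨1, fun _ => (Term.equal t₁ t₂).not, fun _ => 1,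
      fun f => !(f 0), fun a x => ?_⟩
    have hgoal : (BoundedFormula.equal t₁ t₂).Realize a x ↔
        Term.realize (Sum.elim a x) t₁ = Term.realize (Sum.elim a x) t₂ := Iff.rfl
    rw [hgoal]
    have hiff : Term.realize (Sum.elim a x) t₁ = Term.realize (Sum.elim a x) t₂ ↔
        ¬ AtL 1 ((Term.equal t₁ t₂).not) (Sum.elim a x) := by
      rw [atL_one_iff]
      push_neg
      constructor
      · intro heq p hp
        intro hcon
        apply Formula.realize_not.mp hcon
        rw [Formula.realize_equal, realize_vmap hp, realize_vmap hp, heq]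
      · intro hall
        have hval : ∀ p : ℕ, p.Prime →
            padicValNat p ((Term.realize (Sum.elim a x) t₁ : ℕ+) : ℕ)
              = padicValNat p ((Term.realize (Sum.elim a x) t₂ : ℕ+) : ℕ) := by
          intro p hp
          have h1 := hall p hp
          have h2 : (Term.equal t₁ t₂).Realize (vmap p (Sum.elim a x)) := by
            by_contra hc
            exact h1 (Formula.realize_not.mpr hc)
          rw [Formula.realize_equal, realize_vmap hp, realize_vmap hp] at h2
          exact Multiplicative.ofAdd.injective h2
        have hN := (Nat.eq_iff_prime_padicValNat_eq _ _ (PNat.ne_zero _) (PNat.ne_zero _)).mpr hval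
        exact PNat.coe_injective hN
    rw [hiff]
    simp only [Bool.not_eq_true', decide_eq_false_iff_not]
  | rel R ts => exact isEmptyElim R
  | imp φ₁ φ₂ ih₁ ih₂ =>
    obtain ⟨k₁, θ₁, m₁, B₁, h₁⟩ := ih₁
    obtain ⟨k₂, θ₂, m₂, B₂, h₂⟩ := ih₂
    refine ⟨k₁ + k₂, Sum.elim θ₁ θ₂ ∘ finSumFinEquiv.symm, Sum.elim m₁ m₂ ∘ finSumFinEquiv.symm,
      fun f => !(B₁ (fun i => f (finSumFinEquiv (Sum.inl i)))) ||
        B₂ (fun i => f (finSumFinEquiv (Sum.inr i))), fun a x => ?_⟩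
    rw [BoundedFormula.realize_imp, h₁ a x, h₂ a x]
    have e1 : (fun i => (fun i' => decide (AtL ((Sum.elim m₁ m₂ ∘ finSumFinEquiv.symm) i')
        ((Sum.elim θ₁ θ₂ ∘ finSumFinEquiv.symm) i') (Sum.elim a x))) (finSumFinEquiv (Sum.inl i)))
        = fun i => decide (AtL (m₁ i) (θ₁ i) (Sum.elim a x)) := by
      funext i
      simp
    have e2 : (fun i => (fun i' => decide (AtL ((Sum.elim m₁ m₂ ∘ finSumFinEquiv.symm) i')
        ((Sum.elim θ₁ θ₂ ∘ finSumFinEquiv.symm) i') (Sum.elim a x))) (finSumFinEquiv (Sum.inr i)))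
        = fun i => decide (AtL (m₂ i) (θ₂ i) (Sum.elim a x)) := by
      funext i
      simp
    show _ ↔ (!(B₁ _) || B₂ _) = true
    rw [e1, e2]
    cases hb1 : B₁ (fun i => decide (AtL (m₁ i) (θ₁ i) (Sum.elim a x))) <;>
      cases hb2 : B₂ (fun i => decide (AtL (m₂ i) (θ₂ i) (Sum.elim a x))) <;> simp
  | all φ' ih =>
    obtain ⟨k, θ, m, B, h⟩ := ih
    rename_i l'
    set E : (Fin n ⊕ Fin (l' + 1)) → ((Fin n ⊕ Fin l') ⊕ Fin 1) :=
      Sum.elim (fun i => Sum.inl (Sum.inl i))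
        (fun i => Sum.map Sum.inr id (finSumFinEquiv.symm i)) with hE
    obtain ⟨k', θ', m', B', hqe⟩ := qe_ex k (fun j => (θ j).relabel E) m (fun f => !(B f))
    refine ⟨k', θ', m', fun f => !(B' f), fun a x => ?_⟩
    have hK : ∀ y : ℕ+, (Sum.elim (Sum.elim a x) (fun _ : Fin 1 => y)) ∘ E
        = Sum.elim a (Fin.snoc x y) := by
      intro y
      funext z
      rcases z with i | i
      · rfl
      · rw [hE]
        simp only [Sum.elim_inr, Function.comp_apply]
        rcases h2 : finSumFinEquiv.symm i with i' | i'
        · have hi : i = Fin.castSucc i' := by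
            have h3 := congrArg finSumFinEquiv h2
            rw [Equiv.apply_symm_apply] at h3
            rw [h3]
            rfl
          rw [hi, Fin.snoc_castSucc]
          rfl
        · have hi : i = Fin.last l' := by
            have h3 := congrArg finSumFinEquiv h2
            rw [Equiv.apply_symm_apply] at h3
            rw [h3]
            have h4 : i' = 0 := Subsingleton.elim _ _
            subst h4
            ext
            simp
          rw [hi, Fin.snoc_last]
          rfl
    have hreal : ∀ (y : ℕ+) (j : Fin k),
        AtL (m j) (θ j) (Sum.elim a (Fin.snoc x y))
          ↔ AtL (m j) ((θ j).relabel E) (Sum.elim (Sum.elim a x) (fun _ : Fin 1 => y)) := by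
      intro y j
      unfold AtL
      apply exists_congr
      intro S
      apply and_congr_right
      intro _
      apply forall_congr'
      intro p
      apply imp_congr_right
      intro _
      apply and_congr_right
      intro hp
      rw [Formula.realize_relabel]
      have hc2 : vmap p (Sum.elim (Sum.elim a x) (fun _ : Fin 1 => y)) ∘ E
          = vmap p (Sum.elim a (Fin.snoc x y)) := by
        show vmap p ((Sum.elim (Sum.elim a x) (fun _ : Fin 1 => y)) ∘ E) = _
        rw [hK y]
      rw [hc2]
    have hstep1 : ∀ y : ℕ+,
        (BoundedFormula.Realize φ' a (Fin.snoc x y)) ↔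
        B (fun i => decide (AtL (m i) ((θ i).relabel E)
          (Sum.elim (Sum.elim a x) (fun _ : Fin 1 => y)))) = true := by
      intro y
      rw [h a (Fin.snoc x y)]
      have hbits : (fun i => decide (AtL (m i) (θ i) (Sum.elim a (Fin.snoc x y))))
          = (fun i => decide (AtL (m i) ((θ i).relabel E)
              (Sum.elim (Sum.elim a x) (fun _ : Fin 1 => y)))) := by
        funext i
        rw [decide_eq_decide]
        exact hreal y i
      rw [hbits]
    have hqe' := hqe (Sum.elim a x)
    rw [BoundedFormula.realize_all]
    show _ ↔ (!(B' (fun i => decide (AtL (m' i) (θ' i) (Sum.elim a x))))) = true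
    constructor
    · intro hall
      cases hb : B' (fun i => decide (AtL (m' i) (θ' i) (Sum.elim a x))) with
      | false => rfl
      | true =>
        exfalso
        obtain ⟨y, hy⟩ := hqe'.mpr hb
        have h3 := (hstep1 y).mp (hall y)
        rw [h3] at hy
        simp at hy
    · intro hnot y
      rw [hstep1 y]
      by_contra hc
      have hBf : B (fun i => decide (AtL (m i) ((θ i).relabel E)
          (Sum.elim (Sum.elim a x) (fun _ : Fin 1 => y)))) = false := by
        cases hB : B (fun i => decide (AtL (m i) ((θ i).relabel E)
            (Sum.elim (Sum.elim a x) (fun _ : Fin 1 => y)))) with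
        | false => rfl
        | true => exact absurd hB hc
      have hex : ∃ y : ℕ+, (fun f => !(B f)) (fun i => decide (AtL (m i) ((θ i).relabel E)
          (Sum.elim (Sum.elim a x) (fun _ : Fin 1 => y)))) = true := by
        refine ⟨y, ?_⟩
        show (!(B _)) = true
        rw [hBf]
        rfl
      have h4 := hqe'.mp hex
      rw [h4] at hnot
      simp at hnot

end
end SkolemQE

open scoped Classical in
/-- Quantifier elimination for Skolem arithmetic (semantic form over the standard model):
every formula is equivalent to a Boolean combination of relativized counting formulas
`θᵢ^{≥mᵢ}`, evaluated in the additive structure `(ℕ,+,0)` at the p-adic valuations. -/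
theorem skolem_arithmetic_qe (n : ℕ) (φ : L.Formula (Fin n)) :
    ∃ (k : ℕ) (θ : Fin k → L.Formula (Fin n)) (m : Fin k → ℕ)
      (B : (Fin k → Bool) → Bool),
      ∀ a : Fin n → ℕ+,
        φ.Realize a ↔
          B (fun i =>
            decide (∃ S : Finset ℕ, S.card = m i ∧
              ∀ p ∈ S, p.Prime ∧
                (θ i).Realize
                  (fun j => (Multiplicative.ofAdd (padicValNat p ((a j : ℕ))) :
                    Multiplicative ℕ)))) = true := by
  classical
  obtain ⟨k, θ, m, B, h⟩ := SkolemQE.main_bf n (l := 0) φ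
  refine ⟨k, fun i => (θ i).relabel (Sum.elim id Fin.elim0), m, B, fun a => ?_⟩
  have h0 : φ.Realize a ↔ B (fun i => decide (SkolemQE.AtL (m i) (θ i)
      (Sum.elim a (fun z : Fin 0 => z.elim0)))) = true := by
    unfold Formula.Realize
    refine Iff.trans ?_ (h a (fun z : Fin 0 => z.elim0))
    exact iff_of_eq (congrArg (fun xs => BoundedFormula.Realize φ a xs) (Subsingleton.elim _ _))
  rw [h0]
  have hb : (fun i =>
      decide (∃ S : Finset ℕ, S.card = m i ∧
        ∀ p ∈ S, p.Prime ∧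
          ((θ i).relabel (Sum.elim id Fin.elim0)).Realize
            (fun j => (Multiplicative.ofAdd (padicValNat p ((a j : ℕ))) :
              Multiplicative ℕ))))
      = (fun i => decide (SkolemQE.AtL (m i) (θ i) (Sum.elim a (fun z : Fin 0 => z.elim0)))) := by
    funext i
    rw [decide_eq_decide]
    unfold SkolemQE.AtL
    apply exists_congr
    intro S
    apply and_congr_right
    intro _
    apply forall_congr'
    intro p
    apply imp_congr_right
    intro _
    apply and_congr_right
    intro hp
    rw [Formula.realize_relabel]
    have he : (fun j => (Multiplicative.ofAdd (padicValNat p ((a j : ℕ))) :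
        Multiplicative ℕ)) ∘ (Sum.elim id Fin.elim0)
        = SkolemQE.vmap p (Sum.elim a (fun z : Fin 0 => z.elim0)) := by
      funext z
      rcases z with z | z
      · rfl
      · exact z.elim0
    rw [he]
  rw [hb]
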